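/- Let K be a field and G = (V, E) a finite connected simple graph with a vertex v0 and subsets V1, V2 ⊆ V such that V1 ∪ V2 = V, V1 ∩ V2 = {v0}, and no edge of G joins a vertex of V1 ∖ {v0} to a vertex of V2 ∖ {v0}; let E1 and E2 be the sets of edges with both endpoints in V1 and in V2 respectively, so E = E1 ⊔ E2. Let W ⊆ K^E be the K-span of the incidence vectors of all vertices of G, and for i = 1, 2 let W_i ⊆ K^E be the K-span of the incidence vectors of the vertices in V_i ∖ {v0}. Then every vector of W_i has all coordinates indexed by E ∖ E_i equal to zero, and W is the internal direct sum of W1 and W2: W1 ∩ W2 = {0} and W1 + W2 = W. -/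

import Mathlib

/-- The incidence vector of a vertex `v` with respect to an orientation
`(src, tgt)` of the edges of a simple graph `G`. -/
noncomputable def incVec (K : Type*) [Field K] {V : Type*} [DecidableEq V]
    {G : SimpleGraph V} (src tgt : G.edgeSet → V) (v : V) : G.edgeSet → K :=
  fun e => if v = tgt e then 1 else if v = src e then -1 else 0

theorem stmt_5 {K V : Type*} [Field K] [Fintype V] [DecidableEq V]
    (G : SimpleGraph V) (hconn : G.Connected)
    (src tgt : G.edgeSet → V)
    (horient : ∀ e : G.edgeSet, (e : Sym2 V) = Sym2.mk (src e) (tgt e))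
    (v0 : V) (V1 V2 : Set V)
    (hcover : V1 ∪ V2 = Set.univ) (hmeet : V1 ∩ V2 = {v0})
    -- no edge joins a vertex of `V1 ∖ {v0}` to a vertex of `V2 ∖ {v0}`
    (hsep : ∀ a ∈ V1, ∀ b ∈ V2, a ≠ v0 → b ≠ v0 → ¬ G.Adj a b) :
    -- every vector of `W1` is supported on edges with both endpoints in `V1`
    (∀ w ∈ Submodule.span K (incVec K src tgt '' (V1 \ {v0})),
      ∀ e : G.edgeSet, ¬ (∀ v : V, v ∈ (e : Sym2 V) → v ∈ V1) → w e = 0) ∧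
    -- every vector of `W2` is supported on edges with both endpoints in `V2`
    (∀ w ∈ Submodule.span K (incVec K src tgt '' (V2 \ {v0})),
      ∀ e : G.edgeSet, ¬ (∀ v : V, v ∈ (e : Sym2 V) → v ∈ V2) → w e = 0) ∧
    -- `W = W1 ⊕ W2` internally
    Submodule.span K (incVec K src tgt '' (V1 \ {v0})) ⊓
      Submodule.span K (incVec K src tgt '' (V2 \ {v0})) = ⊥ ∧
    Submodule.span K (incVec K src tgt '' (V1 \ {v0})) ⊔
      Submodule.span K (incVec K src tgt '' (V2 \ {v0})) =
      Submodule.span K (Set.range (incVec K src tgt)) := by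
  classical
  have hadj : ∀ e : G.edgeSet, G.Adj (src e) (tgt e) := by
    intro e
    have h := e.2
    rw [horient e] at h
    exact h
  have hv01 : v0 ∈ V1 ∩ V2 := by
    rw [hmeet]; rfl
  have hcov : ∀ u : V, u ∈ V1 ∨ u ∈ V2 := by
    intro u
    have : u ∈ V1 ∪ V2 := by rw [hcover]; trivial
    exact this
  -- key support lemma for generators
  have key : ∀ (A B : Set V), v0 ∈ A → (∀ u, u ∈ A ∨ u ∈ B) →
      (∀ a ∈ A, ∀ b ∈ B, a ≠ v0 → b ≠ v0 → ¬ G.Adj a b) →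
      ∀ v ∈ A \ ({v0} : Set V), ∀ e : G.edgeSet,
        ¬ (∀ u : V, u ∈ (e : Sym2 V) → u ∈ A) → incVec K src tgt v e = 0 := by
    intro A B hA hcovAB hsep' v hv e hne
    obtain ⟨hvA, hvne⟩ := hv
    have hvne' : v ≠ v0 := hvne
    have hother : ∀ u, G.Adj v u → u ∈ A := by
      intro u hu
      rcases hcovAB u with h | h
      · exact h
      · by_cases hu0 : u = v0
        · subst hu0; exact hA
        · exact absurd hu (hsep' v hvA u h hvne' hu0)
    have hall : (v = src e ∨ v = tgt e) → ∀ u : V, u ∈ (e : Sym2 V) → u ∈ A := by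
      intro hv' u hu
      rw [horient e, Sym2.mem_iff] at hu
      rcases hv' with hv' | hv' <;> rcases hu with hu | hu
      · have : u = v := by rw [hu, ← hv']
        rw [this]; exact hvA
      · exact hother u (by rw [hv', hu]; exact hadj e)
      · exact hother u (by rw [hv', hu]; exact (hadj e).symm)
      · have : u = v := by rw [hu, ← hv']
        rw [this]; exact hvA
    simp only [incVec]
    split_ifs with h1 h2
    · exact absurd (hall (Or.inr h1)) hne
    · exact absurd (hall (Or.inl h2)) hne
    · rfl
  -- extend to span
  have spankey : ∀ (A : Set V) (S : Set V),
      (∀ v ∈ S, ∀ e : G.edgeSet, ¬ (∀ u : V, u ∈ (e : Sym2 V) → u ∈ A) →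
        incVec K src tgt v e = 0) →
      ∀ w ∈ Submodule.span K (incVec K src tgt '' S), ∀ e : G.edgeSet,
        ¬ (∀ u : V, u ∈ (e : Sym2 V) → u ∈ A) → w e = 0 := by
    intro A S hS w hw e he
    have hle : Submodule.span K (incVec K src tgt '' S) ≤
        LinearMap.ker (LinearMap.proj (R := K) (φ := fun _ : G.edgeSet => K) e) := by
      rw [Submodule.span_le]
      rintro x ⟨v, hv, rfl⟩
      exact LinearMap.mem_ker.mpr (hS v hv e he)
    exact hle hw
  have part1 := spankey V1 (V1 \ {v0})
    (key V1 V2 hv01.1 hcov hsep)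
  have part2 := spankey V2 (V2 \ {v0})
    (key V2 V1 hv01.2 (fun u => (hcov u).symm)
      (fun a ha b hb ha0 hb0 h => hsep b hb a ha hb0 ha0 h.symm))
  refine ⟨part1, part2, ?_, ?_⟩
  · -- intersection is trivial
    rw [eq_bot_iff]
    intro w hw
    have h1 := part1 w hw.1
    have h2 := part2 w hw.2
    have : w = 0 := by
      funext e
      by_cases hc : ∀ u : V, u ∈ (e : Sym2 V) → u ∈ V1
      · apply h2 e
        intro hc2
        have hsrc : src e ∈ (e : Sym2 V) := by
          rw [horient e]; exact Sym2.mem_mk_left _ _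
        have htgt : tgt e ∈ (e : Sym2 V) := by
          rw [horient e]; exact Sym2.mem_mk_right _ _
        have hs : src e ∈ ({v0} : Set V) := by
          rw [← hmeet]; exact ⟨hc _ hsrc, hc2 _ hsrc⟩
        have ht : tgt e ∈ ({v0} : Set V) := by
          rw [← hmeet]; exact ⟨hc _ htgt, hc2 _ htgt⟩
        exact (hadj e).ne (by rw [Set.mem_singleton_iff] at hs ht; rw [hs, ht])
      · exact h1 e hc
    simpa using this
  · -- sum is everything
    have hsum : ∑ v : V, incVec K src tgt v = 0 := by
      funext e
      have hne := (hadj e).ne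
      simp only [Finset.sum_apply, Pi.zero_apply, incVec]
      have heq : ∀ v : V, (if v = tgt e then (1 : K) else if v = src e then -1 else 0)
          = (if v = tgt e then (1 : K) else 0) + (if v = src e then (-1 : K) else 0) := by
        intro v
        by_cases h1 : v = tgt e
        · subst h1; simp [Ne.symm hne]
        · by_cases h2 : v = src e <;> simp [h1, h2, hne]
      rw [Finset.sum_congr rfl fun v _ => heq v, Finset.sum_add_distrib,
        Finset.sum_ite_eq' Finset.univ (tgt e) (fun _ => (1 : K)),
        Finset.sum_ite_eq' Finset.univ (src e) (fun _ => (-1 : K))]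
      simp
    have hmemsup : ∀ v : V, incVec K src tgt v ∈
        Submodule.span K (incVec K src tgt '' (V1 \ {v0})) ⊔
        Submodule.span K (incVec K src tgt '' (V2 \ {v0})) := by
      have hne0 : ∀ v : V, v ≠ v0 → incVec K src tgt v ∈
          Submodule.span K (incVec K src tgt '' (V1 \ {v0})) ⊔
          Submodule.span K (incVec K src tgt '' (V2 \ {v0})) := by
        intro v hv
        rcases hcov v with h | h
        · exact Submodule.mem_sup_left
            (Submodule.subset_span ⟨v, ⟨h, hv⟩, rfl⟩)
        · exact Submodule.mem_sup_right
            (Submodule.subset_span ⟨v, ⟨h, hv⟩, rfl⟩)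
      intro v
      by_cases hv : v = v0
      · subst hv
        have h0 : incVec K src tgt v =
            - ∑ u ∈ Finset.univ.erase v, incVec K src tgt u := by
          have h := Finset.sum_erase_add Finset.univ (incVec K src tgt) (Finset.mem_univ v)
          rw [hsum] at h
          exact eq_neg_of_add_eq_zero_right h
        rw [h0]
        exact Submodule.neg_mem _ (Submodule.sum_mem _ fun u hu =>
          hne0 u (Finset.ne_of_mem_erase hu))
      · exact hne0 v hv
    apply le_antisymm
    · exact sup_le (Submodule.span_mono (Set.image_subset_range _ _))
        (Submodule.span_mono (Set.image_subset_range _ _))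
    · rw [Submodule.span_le]
      rintro x ⟨v, rfl⟩
      exact hmemsup v
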